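/- Let G be an n-vertex bipartite graph, S* a fixed vertex cover of G, and H the perturbation of G with respect to S*. If Q is a vertex cover of G, then f(Q) is a vertex cover of H and 2n·|Q| ≤ |f(Q)| ≤ (2n + 1)·|Q|. Moreover, if Q̂ is a vertex cover of H, then f⁻¹(Q̂) is a vertex cover of G and |f⁻¹(Q̂)| ≤ ⌊|Q̂| / (2n)⌋. -/

import Mathlib

/-- A set of vertices is a vertex cover of `G` if it contains at least one
endpoint of every edge. -/
def IsVC {α : Type*} (G : SimpleGraph α) (S : Finset α) : Prop :=
  ∀ ⦃u v : α⦄, G.Adj u v → u ∈ S ∨ v ∈ S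

/-- Vertex type of the perturbation `H` of an `n`-vertex graph `G` with respect
to `S*`: each vertex `v ∈ S*` gets `2n` twin copies and each `v ∉ S*` gets
`2n + 1` twin copies. -/
abbrev PV (V : Type) [DecidableEq V] (n : ℕ) (Sstar : Finset V) : Type :=
  {p : V × Fin (2 * n + 1) // p.1 ∈ Sstar → (p.2 : ℕ) < 2 * n}

/-- The perturbation `H` of `G` with respect to `S*`: a copy of `u` and a copy
of `v` are adjacent iff `uv` is an edge of `G` (in particular copies of the
same vertex are non-adjacent). -/
def perturb {V : Type} [DecidableEq V] (G : SimpleGraph V) (n : ℕ) (Sstar : Finset V) :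
    SimpleGraph (PV V n Sstar) where
  Adj p q := G.Adj p.1.1 q.1.1
  symm := ⟨fun _ _ h => G.symm.symm _ _ h⟩
  loopless := ⟨fun _ h => G.loopless.irrefl _ h⟩

/-- `f(v)`: the set of copies of `v` in the perturbation. -/
def fcopy {V : Type} [DecidableEq V] [Fintype V] (n : ℕ) (Sstar : Finset V) (v : V) :
    Finset (PV V n Sstar) :=
  Finset.univ.filter (fun p => p.1.1 = v)

/-- `f(X) = ⋃_{v ∈ X} f(v)`. -/
def fset {V : Type} [DecidableEq V] [Fintype V] (n : ℕ) (Sstar : Finset V) (X : Finset V) :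
    Finset (PV V n Sstar) :=
  Finset.univ.filter (fun p => p.1.1 ∈ X)

/-- `f⁻¹(X̂) = {v : f(v) ⊆ X̂}`. -/
def finv {V : Type} [DecidableEq V] [Fintype V] (n : ℕ) (Sstar : Finset V)
    (Xh : Finset (PV V n Sstar)) : Finset V :=
  Finset.univ.filter (fun v => fcopy n Sstar v ⊆ Xh)

lemma fcopy_card_ge {V : Type} [DecidableEq V] [Fintype V] (n : ℕ) (Sstar : Finset V) (v : V) :
    2 * n ≤ (fcopy n Sstar v).card := by
  classical
  have := Finset.card_le_card_of_injOn
    (f := fun i : Fin (2 * n) =>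
      (⟨(v, ⟨(i : ℕ), by omega⟩), fun _ => i.2⟩ : PV V n Sstar))
    (s := (Finset.univ : Finset (Fin (2 * n)))) (t := fcopy n Sstar v)
    (by intro i _; simp [fcopy])
    (by intro i _ j _ h; simpa [Fin.ext_iff] using congrArg (fun p => (p.1.2 : ℕ)) h)
  simpa using this

lemma fcopy_card_le {V : Type} [DecidableEq V] [Fintype V] (n : ℕ) (Sstar : Finset V) (v : V) :
    (fcopy n Sstar v).card ≤ 2 * n + 1 := by
  classical
  have := Finset.card_le_card_of_injOn (f := fun p : PV V n Sstar => p.1.2)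
    (s := fcopy n Sstar v) (t := (Finset.univ : Finset (Fin (2 * n + 1))))
    (by intro p _; simp)
    (by
      intro p hp q hq h
      simp only [fcopy, Finset.mem_coe, Finset.mem_filter] at hp hq
      exact Subtype.ext (Prod.ext (hp.2.trans hq.2.symm) h))
  simpa using this

lemma fset_eq_biUnion {V : Type} [DecidableEq V] [Fintype V] (n : ℕ) (Sstar : Finset V)
    (X : Finset V) : fset n Sstar X = X.biUnion (fcopy n Sstar) := by
  classical
  ext p
  simp only [fset, fcopy, Finset.mem_filter, Finset.mem_biUnion, Finset.mem_univ, true_and]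
  constructor
  · intro h; exact ⟨p.1.1, h, rfl⟩
  · rintro ⟨v, hv, rfl⟩; exact hv

lemma fcopy_disj {V : Type} [DecidableEq V] [Fintype V] (n : ℕ) (Sstar : Finset V) :
    ∀ u ∈ (Finset.univ : Finset V), ∀ v ∈ (Finset.univ : Finset V), u ≠ v →
      Disjoint (fcopy n Sstar u) (fcopy n Sstar v) := by
  intro u _ v _ huv
  refine Finset.disjoint_left.2 ?_
  intro p hp hq
  simp only [fcopy, Finset.mem_coe, Finset.mem_filter] at hp hq
  exact huv (hp.2.symm.trans hq.2)

/-- Let `G` be an `n`-vertex bipartite graph, `S*` a vertex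
cover of `G`, and `H` the perturbation of `G` with respect to `S*`.  If `Q` is
a vertex cover of `G` then `f(Q)` is a vertex cover of `H` with
`2n·|Q| ≤ |f(Q)| ≤ (2n+1)·|Q|`; and if `Q̂` is a vertex cover of `H` then
`f⁻¹(Q̂)` is a vertex cover of `G` with `|f⁻¹(Q̂)| ≤ ⌊|Q̂| / (2n)⌋`. -/
theorem stmt4 {V : Type} [Fintype V] [DecidableEq V] (G : SimpleGraph V)
    (hbip : G.Colorable 2) (n : ℕ) (hn : Fintype.card V = n)
    (Sstar : Finset V) (hSstar : IsVC G Sstar) :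
    (∀ Q : Finset V, IsVC G Q →
      IsVC (perturb G n Sstar) (fset n Sstar Q) ∧
        2 * n * Q.card ≤ (fset n Sstar Q).card ∧
        (fset n Sstar Q).card ≤ (2 * n + 1) * Q.card) ∧
    (∀ Qh : Finset (PV V n Sstar), IsVC (perturb G n Sstar) Qh →
      IsVC G (finv n Sstar Qh) ∧ (finv n Sstar Qh).card ≤ Qh.card / (2 * n)) := by
  classical
  constructor
  · intro Q hQ
    refine ⟨?_, ?_, ?_⟩
    · intro p q hpq
      rcases hQ hpq with h | h
      · exact Or.inl (by simp [fset, h])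
      · exact Or.inr (by simp [fset, h])
    · rw [fset_eq_biUnion, Finset.card_biUnion
        (fun u hu v hv huv => fcopy_disj n Sstar u (Finset.mem_univ u) v (Finset.mem_univ v) huv)]
      calc 2 * n * Q.card = ∑ _v ∈ Q, 2 * n := by rw [Finset.sum_const, smul_eq_mul, mul_comm]
        _ ≤ ∑ v ∈ Q, (fcopy n Sstar v).card :=
          Finset.sum_le_sum fun v _ => fcopy_card_ge n Sstar v
    · rw [fset_eq_biUnion, Finset.card_biUnion
        (fun u hu v hv huv => fcopy_disj n Sstar u (Finset.mem_univ u) v (Finset.mem_univ v) huv)]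
      calc ∑ v ∈ Q, (fcopy n Sstar v).card ≤ ∑ _v ∈ Q, (2 * n + 1) :=
            Finset.sum_le_sum fun v _ => fcopy_card_le n Sstar v
        _ = (2 * n + 1) * Q.card := by rw [Finset.sum_const, smul_eq_mul, mul_comm]
  · intro Qh hQh
    constructor
    · intro u v huv
      by_contra hcon
      push_neg at hcon
      obtain ⟨hu, hv⟩ := hcon
      simp only [finv, Finset.mem_filter, Finset.mem_univ, true_and] at hu hv
      obtain ⟨p, hp, hpQ⟩ := Finset.not_subset.1 hu
      obtain ⟨q, hq, hqQ⟩ := Finset.not_subset.1 hv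
      simp only [fcopy, Finset.mem_filter, Finset.mem_univ, true_and] at hp hq
      have hadj : (perturb G n Sstar).Adj p q := by
        show G.Adj p.1.1 q.1.1
        rw [hp, hq]; exact huv
      rcases hQh hadj with h | h
      · exact hpQ h
      · exact hqQ h
    · rcases Nat.eq_zero_or_pos n with hn0 | hn0
      · have h := Finset.card_le_univ (finv n Sstar Qh)
        rw [hn] at h
        have h0 : (finv n Sstar Qh).card = 0 := by omega
        rw [h0]
        exact Nat.zero_le _
      · rw [Nat.le_div_iff_mul_le (by omega : 0 < 2 * n)]
        have hsub : (finv n Sstar Qh).biUnion (fcopy n Sstar) ⊆ Qh := by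
          intro p hp
          obtain ⟨v, hv, hpv⟩ := Finset.mem_biUnion.1 hp
          simp only [finv, Finset.mem_filter, Finset.mem_univ, true_and] at hv
          exact hv hpv
        calc (finv n Sstar Qh).card * (2 * n)
            = ∑ _v ∈ finv n Sstar Qh, 2 * n := by rw [Finset.sum_const, smul_eq_mul]
          _ ≤ ∑ v ∈ finv n Sstar Qh, (fcopy n Sstar v).card :=
              Finset.sum_le_sum fun v _ => fcopy_card_ge n Sstar v
          _ = ((finv n Sstar Qh).biUnion (fcopy n Sstar)).card :=
              (Finset.card_biUnion (fun u hu v hv huv =>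
                fcopy_disj n Sstar u (Finset.mem_univ u) v (Finset.mem_univ v) huv)).symm
          _ ≤ Qh.card := Finset.card_le_card hsub
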